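/- Let (d_i)_{i≥1} be a bounded sequence of strictly positive real numbers such that limsup_{n→∞} (1/n)·(d_1 + ⋯ + d_{n(n+1)/2}) > 0, and let D = diag(d). Then D cannot be obtained via the Anderson model: there do not exist a compact operator C and a bounded operator Z on H, at least one of which is block tridiagonal with central block sizes k_n = n (so the n-th block consists of the indices i with n(n−1)/2 < i ≤ n(n+1)/2), such that D = C∘Z − Z∘C. -/

import Mathlib

open Filter

variable {H : Type*} [NormedAddCommGroup H] [InnerProductSpace ℂ H] [CompleteSpace H]

/-- Partial sums `s n = k 1 + ⋯ + k n` of a sequence of block sizes (with `s 0 = 0`). -/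
def psum (k : ℕ → ℕ) (n : ℕ) : ℕ := ∑ j ∈ Finset.Icc 1 n, k j

/-- The block index `b i` of an index `i ≥ 1`: the unique `n` with `s (n-1) < i ≤ s n`
(realized as the least `n` with `i ≤ s n`). -/
noncomputable def blockIdx (k : ℕ → ℕ) (i : ℕ) : ℕ := sInf {n | i ≤ psum k n}

/-- A bounded operator `W` is block tridiagonal with central block sizes `k n` if
`⟪e i, W (e j)⟫ = 0` whenever `|b i - b j| ≥ 2`. -/
def IsBlockTridiagonal (e : HilbertBasis ℕ+ ℂ H) (k : ℕ → ℕ) (W : H →L[ℂ] H) : Prop :=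
  ∀ i j : ℕ+, 2 ≤ |(blockIdx k (i : ℕ) : ℤ) - (blockIdx k (j : ℕ) : ℤ)| →
    (inner ℂ (e i) (W (e j)) : ℂ) = 0

/-- The orthogonal projection `P n` onto `span {e i : s (n-1) < i ≤ s n}`. -/
noncomputable def blockProj (e : HilbertBasis ℕ+ ℂ H) (k : ℕ → ℕ) (n : ℕ) : H →L[ℂ] H :=
  ∑ i ∈ (Finset.Ioc (psum k (n - 1)) (psum k n)).attach,
    (innerSL ℂ (e ⟨i.1, Nat.lt_of_le_of_lt (Nat.zero_le _) (Finset.mem_Ioc.mp i.2).1⟩)).smulRight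
      (e ⟨i.1, Nat.lt_of_le_of_lt (Nat.zero_le _) (Finset.mem_Ioc.mp i.2).1⟩)

/-- The partial trace `∑_{j=1}^m ⟪e j, T (e j)⟫`. -/
noncomputable def ptrace (e : HilbertBasis ℕ+ ℂ H) (T : H →L[ℂ] H) (m : ℕ) : ℂ :=
  ∑ i ∈ (Finset.Icc 1 m).attach,
    (inner ℂ (e ⟨i.1, (Finset.mem_Icc.mp i.2).1⟩) (T (e ⟨i.1, (Finset.mem_Icc.mp i.2).1⟩)) : ℂ)

/-- The upper off-diagonal block `A n (W) = P n ∘ W ∘ P (n+1)`. -/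
noncomputable def blockA (e : HilbertBasis ℕ+ ℂ H) (k : ℕ → ℕ) (n : ℕ) (W : H →L[ℂ] H) :
    H →L[ℂ] H :=
  blockProj e k n ∘L W ∘L blockProj e k (n + 1)

/-- The lower off-diagonal block `B n (W) = P (n+1) ∘ W ∘ P n`. -/
noncomputable def blockB (e : HilbertBasis ℕ+ ℂ H) (k : ℕ → ℕ) (n : ℕ) (W : H →L[ℂ] H) :
    H →L[ℂ] H :=
  blockProj e k (n + 1) ∘L W ∘L blockProj e k n

/- ### Auxiliary lemmas -/

lemma psum_id_mono : Monotone (psum (fun n : ℕ => n)) := fun _ _ hab =>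
  Finset.sum_le_sum_of_subset (Finset.Icc_subset_Icc_right hab)

lemma le_psum_id (n : ℕ) : n ≤ psum (fun n : ℕ => n) n := by
  cases n with
  | zero => simp [psum]
  | succ m =>
    exact Finset.single_le_sum (f := fun j : ℕ => j) (fun i _ => Nat.zero_le i)
      (by simp : (m+1) ∈ Finset.Icc 1 (m+1))

lemma blockIdx_id_le_iff (i m : ℕ) :
    blockIdx (fun n => n) i ≤ m ↔ i ≤ psum (fun n => n) m := by
  constructor
  · intro h
    have hne : {n | i ≤ psum (fun n => n) n}.Nonempty := ⟨i, le_psum_id i⟩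
    have h1 : i ≤ psum (fun n => n) (blockIdx (fun n => n) i) := Nat.sInf_mem hne
    exact le_trans h1 (psum_id_mono h)
  · intro h
    exact Nat.sInf_le h

lemma two_mul_psum_id (n : ℕ) : 2 * psum (fun n : ℕ => n) n = n * (n + 1) := by
  induction n with
  | zero => simp [psum]
  | succ m ih =>
    unfold psum at ih ⊢
    rw [Finset.sum_Icc_succ_top (Nat.le_add_left 1 m), mul_add, ih]
    ring

lemma psum_id_succ (m : ℕ) :
    psum (fun n : ℕ => n) (m + 1) = psum (fun n : ℕ => n) m + (m + 1) := by
  unfold psum; rw [Finset.sum_Icc_succ_top (Nat.le_add_left 1 m)]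

lemma psum_id_eq (n : ℕ) : psum (fun n : ℕ => n) n = n * (n + 1) / 2 := by
  have := two_mul_psum_id n; omega

lemma pnat_atTop_le_cofinite : (atTop : Filter ℕ+) ≤ cofinite :=
  le_cofinite_iff_eventually_ne.mpr fun x =>
    (eventually_ge_atTop (x + 1)).mono fun y hy => by
      intro h
      rw [h] at hy
      have : (x : ℕ) + 1 ≤ (x : ℕ) := by exact_mod_cast hy
      omega

/-- Inner products against a fixed vector tend to zero along a Hilbert basis. -/
lemma inner_basis_tendsto (e : HilbertBasis ℕ+ ℂ H) (x : H) :
    Tendsto (fun j : ℕ+ => ‖(inner ℂ x (e j) : ℂ)‖) atTop (nhds 0) := by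
  have hsum : Summable fun j : ℕ+ => ‖(inner ℂ (e j) x : ℂ)‖ ^ 2 :=
    e.orthonormal.inner_products_summable x
  have h0 : Tendsto (fun j : ℕ+ => ‖(inner ℂ (e j) x : ℂ)‖ ^ 2) atTop (nhds 0) :=
    (hsum.tendsto_cofinite_zero).mono_left pnat_atTop_le_cofinite
  have h1 := (Real.continuous_sqrt.tendsto 0).comp h0
  rw [Real.sqrt_zero] at h1
  have h2 : (Real.sqrt ∘ fun j : ℕ+ => ‖(inner ℂ (e j) x : ℂ)‖ ^ 2)
      = fun j : ℕ+ => ‖(inner ℂ x (e j) : ℂ)‖ := by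
    funext j
    simp only [Function.comp_apply, Real.sqrt_sq (norm_nonneg _)]
    exact (norm_inner_symm _ _)
  rwa [h2] at h1

/-- A compact operator sends a Hilbert basis to a null sequence. -/
lemma compactop_tendsto (e : HilbertBasis ℕ+ ℂ H) (C : H →L[ℂ] H)
    (hC : IsCompactOperator (⇑C)) :
    Tendsto (fun j : ℕ+ => ‖C (e j)‖) atTop (nhds 0) := by
  obtain ⟨K, hK, hKmem⟩ := hC
  obtain ⟨r, hr, hball⟩ := Metric.mem_nhds_iff.mp hKmem
  set ρ : ℝ := r / 2 with hρdef
  have hρ : 0 < ρ := by positivity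
  have hmem : ∀ j : ℕ+, C ((ρ : ℂ) • e j) ∈ K := by
    intro j
    apply hball
    rw [Metric.mem_ball, dist_zero_right, norm_smul]
    rw [e.orthonormal.1 j, Complex.norm_real, Real.norm_eq_abs, abs_of_pos hρ]
    rw [mul_one]
    linarith
  have hval : ∀ j : ℕ+, ‖C ((ρ : ℂ) • e j)‖ = ρ * ‖C (e j)‖ := by
    intro j
    rw [map_smul, norm_smul, Complex.norm_real, Real.norm_eq_abs, abs_of_pos hρ]
  rw [Metric.tendsto_nhds]
  intro ε hε
  set δ : ℝ := (ρ * ε) ^ 2 / (‖C‖ * ρ + ρ + 1) with hδdef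
  have hδ : 0 < δ := by positivity
  obtain ⟨t, htfin, htcover⟩ := (Metric.totallyBounded_iff.mp hK.totallyBounded) δ hδ
  have hev : ∀ᶠ j : ℕ+ in atTop, ∀ y ∈ t,
      ‖(inner ℂ ((ContinuousLinearMap.adjoint C) y) (e j) : ℂ)‖ < δ := by
    rw [eventually_all_finite htfin]
    intro y _
    exact (inner_basis_tendsto e ((ContinuousLinearMap.adjoint C) y)).eventually_lt_const hδ
  filter_upwards [hev] with j hj
  rw [Real.dist_eq, sub_zero, abs_of_nonneg (norm_nonneg _)]
  obtain ⟨y, hyt, hy⟩ : ∃ y ∈ t, C ((ρ : ℂ) • e j) ∈ Metric.ball y δ := by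
    have := htcover (hmem j)
    simpa using this
  set u : H := C ((ρ : ℂ) • e j) with hu
  have huy : ‖u - y‖ < δ := by
    rw [← dist_eq_norm]; exact Metric.mem_ball.mp hy
  have hnormu : ‖u‖ ≤ ‖C‖ * ρ := by
    calc ‖u‖ ≤ ‖C‖ * ‖(ρ : ℂ) • e j‖ := C.le_opNorm _
    _ = ‖C‖ * ρ := by
        rw [norm_smul, Complex.norm_real, Real.norm_eq_abs, abs_of_pos hρ,
          e.orthonormal.1 j, mul_one]
  have hinner : ‖(inner ℂ y u : ℂ)‖ ≤ ρ * δ := by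
    have h1 : (inner ℂ y u : ℂ) = (ρ : ℂ) * inner ℂ ((ContinuousLinearMap.adjoint C) y) (e j) := by
      rw [hu, ← ContinuousLinearMap.adjoint_inner_left, inner_smul_right]
    rw [h1, norm_mul, Complex.norm_real, Real.norm_eq_abs, abs_of_pos hρ]
    have := hj y hyt
    nlinarith [norm_nonneg ((inner ℂ ((ContinuousLinearMap.adjoint C) y) (e j) : ℂ))]
  have hsq : ‖u‖ ^ 2 < (ρ * ε) ^ 2 := by
    have h1 : ‖u‖ ^ 2 = RCLike.re (inner ℂ u u : ℂ) := (inner_self_eq_norm_sq (𝕜 := ℂ) u).symm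
    have hsplit : (inner ℂ (u - y) u : ℂ) + inner ℂ y u = inner ℂ u u := by
      rw [← inner_add_left, sub_add_cancel]
    have h2 : RCLike.re (inner ℂ u u : ℂ)
        = RCLike.re (inner ℂ (u - y) u : ℂ) + RCLike.re (inner ℂ y u : ℂ) := by
      rw [← hsplit, map_add]
    have h3 : RCLike.re (inner ℂ (u - y) u : ℂ) ≤ ‖u - y‖ * ‖u‖ := re_inner_le_norm _ _
    have h4 : RCLike.re (inner ℂ y u : ℂ) ≤ ‖(inner ℂ y u : ℂ)‖ := RCLike.re_le_norm _
    have hCρ : 0 ≤ ‖C‖ * ρ := by positivity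
    have key : ‖u‖ ^ 2 ≤ δ * (‖C‖ * ρ) + ρ * δ := by
      rw [h1, h2]
      have : ‖u - y‖ * ‖u‖ ≤ δ * (‖C‖ * ρ) :=
        mul_le_mul (le_of_lt huy) hnormu (norm_nonneg _) (le_of_lt hδ)
      linarith
    have hlt : δ * (‖C‖ * ρ + ρ) < (ρ * ε) ^ 2 := by
      rw [hδdef, div_mul_eq_mul_div, div_lt_iff₀ (by positivity)]
      have hpos : 0 < (ρ * ε) ^ 2 := by positivity
      nlinarith
    nlinarith
  have hlt2 : ‖u‖ < ρ * ε := lt_of_pow_lt_pow_left₀ 2 (by positivity) hsq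
  rw [hval j] at hlt2
  exact lt_of_mul_lt_mul_left hlt2 hρ.le

def pfin (m : ℕ) : Finset ℕ+ := (Finset.Icc 1 m).subtype fun x => 0 < x

lemma mem_pfin {i : ℕ+} {m : ℕ} : i ∈ pfin m ↔ (i : ℕ) ≤ m := by
  unfold pfin
  refine (Finset.mem_subtype.trans Finset.mem_Icc).trans ?_
  exact ⟨fun h => h.2, fun h => ⟨i.property, h⟩⟩

lemma sum_pfin {M : Type*} [AddCommMonoid M] (m : ℕ) (f : ℕ → M) :
    ∑ j ∈ pfin m, f (j : ℕ) = ∑ j ∈ Finset.Icc 1 m, f j := by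
  unfold pfin
  refine (Finset.sum_subtype_eq_sum_filter (s := Finset.Icc 1 m)
    (p := fun x => 0 < x) f).trans ?_
  congr 1
  apply Finset.filter_true_of_mem
  intro x hx
  have := (Finset.mem_Icc.mp hx).1
  omega

lemma card_pfin (m : ℕ) : (pfin m).card = m := by
  rw [Finset.card_eq_sum_ones]
  rw [sum_pfin m (fun _ => 1)]
  simp

lemma pfin_subset {m m' : ℕ} (h : m ≤ m') : pfin m ⊆ pfin m' := by
  intro i hi
  rw [mem_pfin] at *
  omega

lemma abs_ge_two_of {p q n' : ℕ} (hp : n' + 2 ≤ p) (hq : q ≤ n') : 2 ≤ |(p : ℤ) - (q : ℤ)| := by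
  have h : (2 : ℤ) ≤ (p : ℤ) - (q : ℤ) := by omega
  exact le_trans h (le_abs_self _)

lemma sqrt_mul_sqrt_le {S1 S2 c1 c2 : ℝ} (hc1 : 0 ≤ c1) (hc2 : 0 ≤ c2)
    (h1 : S1 ≤ c1 ^ 2) (h2 : S2 ≤ c2 ^ 2) :
    Real.sqrt S1 * Real.sqrt S2 ≤ c1 * c2 := by
  have e1 : Real.sqrt S1 ≤ c1 := by
    calc Real.sqrt S1 ≤ Real.sqrt (c1 ^ 2) := Real.sqrt_le_sqrt h1
    _ = c1 := Real.sqrt_sq hc1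
  have e2 : Real.sqrt S2 ≤ c2 := by
    calc Real.sqrt S2 ≤ Real.sqrt (c2 ^ 2) := Real.sqrt_le_sqrt h2
    _ = c2 := Real.sqrt_sq hc2
  exact mul_le_mul e1 e2 (Real.sqrt_nonneg _) hc1

lemma key_arith {x c0 Zn nr ε : ℝ} (hc0 : 0 < c0) (hε : ε = c0 / (8 * (Zn + 1)))
    (hZn : 0 ≤ Zn) (hn : 1 ≤ nr) (hx : x ≤ 2 * ((nr + 1) * ε * Zn)) :
    x ≤ nr * (c0 / 2) := by
  have hZ1 : (0 : ℝ) < Zn + 1 := by linarith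
  have hεpos : 0 < ε := by rw [hε]; positivity
  have hεval : ε * (Zn + 1) = c0 / 8 := by rw [hε]; field_simp
  have h6 : ε * Zn ≤ c0 / 8 := by nlinarith
  have h7 : 2 * ((nr + 1) * ε * Zn) ≤ 2 * (nr + 1) * (c0 / 8) := by
    nlinarith [mul_le_mul_of_nonneg_left h6 (show (0:ℝ) ≤ 2 * (nr + 1) by linarith)]
  have h8 : (nr + 1) * c0 ≤ 2 * nr * c0 := by nlinarith
  linarith

set_option maxHeartbeats 1000000 in
theorem diag_not_anderson_commutator
    (e : HilbertBasis ℕ+ ℂ H)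
    (d : ℕ → ℝ) (hdpos : ∀ i, 1 ≤ i → 0 < d i) (hdbd : ∃ M : ℝ, ∀ i, 1 ≤ i → d i ≤ M)
    (hlimsup : ∃ c : ℝ, 0 < c ∧
      ∃ᶠ n in atTop, c ≤ (∑ j ∈ Finset.Icc 1 ((n * (n + 1) / 2 : ℕ)), d j) / (n : ℝ))
    (D : H →L[ℂ] H) (hD : ∀ i : ℕ+, D (e i) = (d (i : ℕ) : ℂ) • e i) :
    ¬ ∃ C Z : H →L[ℂ] H, IsCompactOperator (⇑C) ∧
      (IsBlockTridiagonal e (fun n => n) C ∨ IsBlockTridiagonal e (fun n => n) Z) ∧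
      D = C ∘L Z - Z ∘L C := by
  rintro ⟨C, Z, hCcomp, htri, hComm⟩
  obtain ⟨c0, hc0, hfreq⟩ := hlimsup
  classical
  set q : ℕ → ℕ := psum (fun m => m) with hqdef
  set b : ℕ → ℕ := blockIdx (fun m => m) with hbdef
  set a : ℕ+ → ℕ+ → ℂ :=
    fun p r => (inner ℂ (e p) (C (e r)) : ℂ) * (inner ℂ (e r) (Z (e p)) : ℂ) with ha
  have hble : ∀ (i m : ℕ), b i ≤ m ↔ i ≤ q m := fun i m => blockIdx_id_le_iff i m
  -- vanishing far from the diagonal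
  have hvan : ∀ i j : ℕ+, 2 ≤ |(b (i : ℕ) : ℤ) - (b (j : ℕ) : ℤ)| → a i j = 0 := by
    intro i j hij
    rcases htri with hC | hZ
    · simp only [ha]; rw [hC i j hij, zero_mul]
    · simp only [ha]; rw [hZ j i (by rwa [abs_sub_comm] at hij), mul_zero]
  -- the diagonal entries as sums
  have hdiag : ∀ j : ℕ+, HasSum (fun i : ℕ+ => a j i - a i j) ((d (j : ℕ) : ℂ)) := by
    intro j
    have h1 : HasSum (fun i : ℕ+ => (inner ℂ (e j) (C (e i)) : ℂ) * (inner ℂ (e i) (Z (e j)) : ℂ))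
        ((inner ℂ (e j) (C (Z (e j)))) : ℂ) := by
      have h := e.hasSum_inner_mul_inner ((ContinuousLinearMap.adjoint C) (e j)) (Z (e j))
      simpa only [ContinuousLinearMap.adjoint_inner_left] using h
    have h2 : HasSum (fun i : ℕ+ => (inner ℂ (e j) (Z (e i)) : ℂ) * (inner ℂ (e i) (C (e j)) : ℂ))
        ((inner ℂ (e j) (Z (C (e j)))) : ℂ) := by
      have h := e.hasSum_inner_mul_inner ((ContinuousLinearMap.adjoint Z) (e j)) (C (e j))
      simpa only [ContinuousLinearMap.adjoint_inner_left] using h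
    have h3 := h1.sub h2
    have hfun : (fun i : ℕ+ => (inner ℂ (e j) (C (e i)) : ℂ) * (inner ℂ (e i) (Z (e j)) : ℂ)
        - (inner ℂ (e j) (Z (e i)) : ℂ) * (inner ℂ (e i) (C (e j)) : ℂ))
        = fun i : ℕ+ => a j i - a i j := by
      funext i; simp only [ha]; ring
    rw [hfun] at h3
    convert h3 using 1
    · rfl
    have hDj : C (Z (e j)) - Z (C (e j)) = (d (j : ℕ) : ℂ) • e j := by
      have h := hD j
      rw [hComm] at h
      simpa using h
    have hsub : (inner ℂ (e j) (C (Z (e j))) : ℂ) - (inner ℂ (e j) (Z (C (e j))) : ℂ)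
        = (inner ℂ (e j) ((d (j : ℕ) : ℂ) • e j) : ℂ) := by rw [← inner_sub_right, hDj]
    rw [hsub, inner_smul_right, inner_self_eq_norm_sq_to_K, e.orthonormal.1 j]
    norm_num
  -- choose the smallness threshold
  have hZ1 : (0 : ℝ) < ‖Z‖ + 1 := by positivity
  set ε : ℝ := c0 / (8 * (‖Z‖ + 1)) with hε
  have hεpos : 0 < ε := by positivity
  have hCten := compactop_tendsto e C hCcomp
  obtain ⟨N, hN⟩ := eventually_atTop.mp (hCten.eventually_lt_const hεpos)
  -- main estimate
  have key : ∀ n : ℕ, 1 ≤ n → (N : ℕ) ≤ n →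
      (∑ j ∈ Finset.Icc 1 (q n), d j) ≤ (n : ℝ) * (c0 / 2) := by
    intro n hn1 hnN
    set S : Finset ℕ+ := pfin (q n) with hS
    set S' : Finset ℕ+ := pfin (q (n - 1)) with hS'
    set T : Finset ℕ+ := pfin (q (n + 1)) with hT
    set F : Finset ℕ+ := S \ S' with hF
    set B : Finset ℕ+ := T \ S with hB
    have hq_mono : ∀ {m m' : ℕ}, m ≤ m' → q m ≤ q m' := fun h => psum_id_mono h
    have hS'S : S' ⊆ S := pfin_subset (hq_mono (Nat.sub_le n 1))
    have hST : S ⊆ T := pfin_subset (hq_mono (Nat.le_succ n))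
    have hmemF : ∀ j ∈ F, q (n - 1) < (j : ℕ) ∧ (j : ℕ) ≤ q n := by
      intro j hj
      rw [hF, Finset.mem_sdiff, hS, hS', mem_pfin, mem_pfin] at hj
      omega
    have hmemB : ∀ i ∈ B, q n < (i : ℕ) ∧ (i : ℕ) ≤ q (n + 1) := by
      intro i hi
      rw [hB, Finset.mem_sdiff, hT, hS, mem_pfin, mem_pfin] at hi
      omega
    have hFN : ∀ j ∈ F, N ≤ j := by
      intro j hj
      have h1 := (hmemF j hj).1
      have h2 : n - 1 ≤ q (n - 1) := le_psum_id (n - 1)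
      have : (N : ℕ) ≤ (j : ℕ) := by omega
      exact_mod_cast this
    have hBN : ∀ i ∈ B, N ≤ i := by
      intro i hi
      have h1 := (hmemB i hi).1
      have h2 : n ≤ q n := le_psum_id n
      have : (N : ℕ) ≤ (i : ℕ) := by omega
      exact_mod_cast this
    -- the key identity
    have hid : ((∑ j ∈ Finset.Icc 1 (q n), d j : ℝ) : ℂ)
        = ∑ j ∈ F, ∑ i ∈ B, (a j i - a i j) := by
      have e0 : ((∑ j ∈ Finset.Icc 1 (q n), d j : ℝ) : ℂ)
          = ∑ j ∈ S, (d (j : ℕ) : ℂ) := by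
        rw [hS, sum_pfin (q n) (fun m => (d m : ℂ))]
        push_cast
        rfl
      have e1 : ∀ j ∈ S, (d (j : ℕ) : ℂ) = ∑ i ∈ T, (a j i - a i j) := by
        intro j hj
        have hjS : (j : ℕ) ≤ q n := by rwa [hS, mem_pfin] at hj
        have hbj : b (j : ℕ) ≤ n := (hble _ _).mpr hjS
        refine (hdiag j).unique (hasSum_sum_of_ne_finset_zero ?_)
        intro i hi
        have hiT : ¬ ((i : ℕ) ≤ q (n + 1)) := by rwa [hT, mem_pfin] at hi
        have hbi : n + 2 ≤ b (i : ℕ) := by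
          by_contra hcon
          exact hiT ((hble _ _).mp (by omega))
        have hgap : 2 ≤ |(b (i : ℕ) : ℤ) - (b (j : ℕ) : ℤ)| := abs_ge_two_of hbi hbj
        rw [hvan j i (by rwa [abs_sub_comm]), hvan i j hgap, sub_zero]
      have e2 : ∑ j ∈ S, (d (j : ℕ) : ℂ)
          = ∑ j ∈ S, (∑ i ∈ B, (a j i - a i j) + ∑ i ∈ S, (a j i - a i j)) := by
        apply Finset.sum_congr rfl
        intro j hj
        rw [e1 j hj, ← Finset.sum_sdiff hST, ← hB]
      have e3 : ∑ j ∈ S, ∑ i ∈ S, (a j i - a i j) = 0 := by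
        simp only [Finset.sum_sub_distrib]
        rw [Finset.sum_comm, sub_self]
      have e4 : ∑ j ∈ S, ∑ i ∈ B, (a j i - a i j)
          = ∑ j ∈ F, ∑ i ∈ B, (a j i - a i j) := by
        symm
        apply Finset.sum_subset Finset.sdiff_subset
        intro j hjS hjF
        rw [Finset.mem_sdiff] at hjF
        push_neg at hjF
        have hjS' : (j : ℕ) ≤ q (n - 1) := by
          have h5 := hjF hjS
          rwa [hS', mem_pfin] at h5
        have hbj : b (j : ℕ) ≤ n - 1 := (hble _ _).mpr hjS'
        apply Finset.sum_eq_zero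
        intro i hi
        have hbi : n + 1 ≤ b (i : ℕ) := by
          have h1 := (hmemB i hi).1
          by_contra hcon
          have : (i : ℕ) ≤ q n := (hble _ _).mp (by omega)
          omega
        have hgap : 2 ≤ |(b (i : ℕ) : ℤ) - (b (j : ℕ) : ℤ)| :=
          abs_ge_two_of (by omega) (by omega : b (j : ℕ) ≤ n - 1)
        rw [hvan j i (by rwa [abs_sub_comm]), hvan i j hgap, sub_zero]
      rw [e0, e2, Finset.sum_add_distrib, e3, add_zero, e4]
    -- cardinalities
    have hqn : q n = q (n - 1) + n := by
      have h := psum_id_succ (n - 1)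
      rw [← hqdef] at h
      rw [show n - 1 + 1 = n from by omega] at h
      exact h
    have hqn' : q (n + 1) = q n + (n + 1) := by
      have h := psum_id_succ n
      rw [← hqdef] at h
      exact h
    have hcardF : F.card = n := by
      rw [hF, Finset.card_sdiff_of_subset hS'S, hS, hS', card_pfin, card_pfin]
      omega
    have hcardB : B.card = n + 1 := by
      rw [hB, Finset.card_sdiff_of_subset hST, hT, hS, card_pfin, card_pfin]
      omega
    -- norm bounds
    have hCsmall : ∀ j : ℕ+, N ≤ j → ‖C (e j)‖ ≤ ε := fun j hj => (hN j hj).le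
    have hZle : ∀ j : ℕ+, ‖Z (e j)‖ ≤ ‖Z‖ := by
      intro j
      calc ‖Z (e j)‖ ≤ ‖Z‖ * ‖e j‖ := Z.le_opNorm _
      _ = ‖Z‖ := by rw [e.orthonormal.1 j, mul_one]
    -- four quadratic bounds
    have hsq_le : ∀ (x y : ℝ), 0 ≤ x → x ≤ y → x ^ 2 ≤ y ^ 2 := by
      intro x y hx hxy; nlinarith
    have hBCB : ∑ p ∈ F ×ˢ B, ‖(inner ℂ (e p.1) (C (e p.2)) : ℂ)‖ ^ 2
        ≤ ((n : ℝ) + 1) * ε ^ 2 := by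
      rw [Finset.sum_product' (f := fun j i => ‖(inner ℂ (e j) (C (e i)) : ℂ)‖ ^ 2)]
      rw [Finset.sum_comm]
      calc ∑ i ∈ B, ∑ j ∈ F, ‖(inner ℂ (e j) (C (e i)) : ℂ)‖ ^ 2
          ≤ ∑ i ∈ B, ‖C (e i)‖ ^ 2 := Finset.sum_le_sum fun i _ =>
            e.orthonormal.sum_inner_products_le (C (e i))
        _ ≤ ∑ _i ∈ B, ε ^ 2 := Finset.sum_le_sum fun i hi =>
            hsq_le _ _ (norm_nonneg _) (hCsmall i (hBN i hi))
        _ = ((n : ℝ) + 1) * ε ^ 2 := by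
            rw [Finset.sum_const, hcardB, nsmul_eq_mul]; push_cast; ring
    have hBZF : ∑ p ∈ F ×ˢ B, ‖(inner ℂ (e p.2) (Z (e p.1)) : ℂ)‖ ^ 2
        ≤ (n : ℝ) * ‖Z‖ ^ 2 := by
      rw [Finset.sum_product' (f := fun j i => ‖(inner ℂ (e i) (Z (e j)) : ℂ)‖ ^ 2)]
      calc ∑ j ∈ F, ∑ i ∈ B, ‖(inner ℂ (e i) (Z (e j)) : ℂ)‖ ^ 2
          ≤ ∑ j ∈ F, ‖Z (e j)‖ ^ 2 := Finset.sum_le_sum fun j _ =>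
            e.orthonormal.sum_inner_products_le (Z (e j))
        _ ≤ ∑ _j ∈ F, ‖Z‖ ^ 2 := Finset.sum_le_sum fun j _ =>
            hsq_le _ _ (norm_nonneg _) (hZle j)
        _ = (n : ℝ) * ‖Z‖ ^ 2 := by
            rw [Finset.sum_const, hcardF, nsmul_eq_mul]
    have hBCF : ∑ p ∈ F ×ˢ B, ‖(inner ℂ (e p.2) (C (e p.1)) : ℂ)‖ ^ 2
        ≤ (n : ℝ) * ε ^ 2 := by
      rw [Finset.sum_product' (f := fun j i => ‖(inner ℂ (e i) (C (e j)) : ℂ)‖ ^ 2)]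
      calc ∑ j ∈ F, ∑ i ∈ B, ‖(inner ℂ (e i) (C (e j)) : ℂ)‖ ^ 2
          ≤ ∑ j ∈ F, ‖C (e j)‖ ^ 2 := Finset.sum_le_sum fun j _ =>
            e.orthonormal.sum_inner_products_le (C (e j))
        _ ≤ ∑ _j ∈ F, ε ^ 2 := Finset.sum_le_sum fun j hj =>
            hsq_le _ _ (norm_nonneg _) (hCsmall j (hFN j hj))
        _ = (n : ℝ) * ε ^ 2 := by
            rw [Finset.sum_const, hcardF, nsmul_eq_mul]
    have hBZB : ∑ p ∈ F ×ˢ B, ‖(inner ℂ (e p.1) (Z (e p.2)) : ℂ)‖ ^ 2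
        ≤ ((n : ℝ) + 1) * ‖Z‖ ^ 2 := by
      rw [Finset.sum_product' (f := fun j i => ‖(inner ℂ (e j) (Z (e i)) : ℂ)‖ ^ 2)]
      rw [Finset.sum_comm]
      calc ∑ i ∈ B, ∑ j ∈ F, ‖(inner ℂ (e j) (Z (e i)) : ℂ)‖ ^ 2
          ≤ ∑ i ∈ B, ‖Z (e i)‖ ^ 2 := Finset.sum_le_sum fun i _ =>
            e.orthonormal.sum_inner_products_le (Z (e i))
        _ ≤ ∑ _i ∈ B, ‖Z‖ ^ 2 := Finset.sum_le_sum fun i _ =>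
            hsq_le _ _ (norm_nonneg _) (hZle i)
        _ = ((n : ℝ) + 1) * ‖Z‖ ^ 2 := by
            rw [Finset.sum_const, hcardB, nsmul_eq_mul]; push_cast; ring
    -- Cauchy–Schwarz on the two boundary terms
    have hsqn : Real.sqrt ((n : ℝ)) ≤ Real.sqrt ((n : ℝ) + 1) :=
      Real.sqrt_le_sqrt (by linarith)
    have hsqn1 : Real.sqrt ((n : ℝ) + 1) * Real.sqrt ((n : ℝ) + 1) = (n : ℝ) + 1 :=
      Real.mul_self_sqrt (by positivity)
    have hT1 : ‖∑ p ∈ F ×ˢ B, a p.1 p.2‖ ≤ ((n : ℝ) + 1) * ε * ‖Z‖ := by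
      have step1 : ‖∑ p ∈ F ×ˢ B, a p.1 p.2‖
          ≤ ∑ p ∈ F ×ˢ B, ‖(inner ℂ (e p.1) (C (e p.2)) : ℂ)‖
            * ‖(inner ℂ (e p.2) (Z (e p.1)) : ℂ)‖ := by
        refine (norm_sum_le _ _).trans (le_of_eq ?_)
        apply Finset.sum_congr rfl
        intro p _
        simp only [ha]
        rw [norm_mul]
      have step2 : ∑ p ∈ F ×ˢ B, ‖(inner ℂ (e p.1) (C (e p.2)) : ℂ)‖
            * ‖(inner ℂ (e p.2) (Z (e p.1)) : ℂ)‖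
          ≤ Real.sqrt (∑ p ∈ F ×ˢ B, ‖(inner ℂ (e p.1) (C (e p.2)) : ℂ)‖ ^ 2)
            * Real.sqrt (∑ p ∈ F ×ˢ B, ‖(inner ℂ (e p.2) (Z (e p.1)) : ℂ)‖ ^ 2) :=
        Real.sum_mul_le_sqrt_mul_sqrt _ _ _
      have step3 : Real.sqrt (∑ p ∈ F ×ˢ B, ‖(inner ℂ (e p.1) (C (e p.2)) : ℂ)‖ ^ 2)
          * Real.sqrt (∑ p ∈ F ×ˢ B, ‖(inner ℂ (e p.2) (Z (e p.1)) : ℂ)‖ ^ 2)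
          ≤ (Real.sqrt ((n : ℝ) + 1) * ε) * (Real.sqrt ((n : ℝ)) * ‖Z‖) := by
        apply sqrt_mul_sqrt_le (by positivity) (by positivity)
        · rw [mul_pow, Real.sq_sqrt (by positivity)]; exact hBCB
        · rw [mul_pow, Real.sq_sqrt (by positivity)]; exact hBZF
      have step4 : (Real.sqrt ((n : ℝ) + 1) * ε) * (Real.sqrt ((n : ℝ)) * ‖Z‖)
          ≤ ((n : ℝ) + 1) * ε * ‖Z‖ := by
        have h := mul_le_mul_of_nonneg_left hsqn (Real.sqrt_nonneg ((n : ℝ) + 1))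
        rw [hsqn1] at h
        have h2 := mul_le_mul_of_nonneg_right h (mul_nonneg hεpos.le (norm_nonneg Z))
        nlinarith [h2]
      linarith
    have hT2 : ‖∑ p ∈ F ×ˢ B, a p.2 p.1‖ ≤ ((n : ℝ) + 1) * ε * ‖Z‖ := by
      have step1 : ‖∑ p ∈ F ×ˢ B, a p.2 p.1‖
          ≤ ∑ p ∈ F ×ˢ B, ‖(inner ℂ (e p.2) (C (e p.1)) : ℂ)‖
            * ‖(inner ℂ (e p.1) (Z (e p.2)) : ℂ)‖ := by
        refine (norm_sum_le _ _).trans (le_of_eq ?_)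
        apply Finset.sum_congr rfl
        intro p _
        simp only [ha]
        rw [norm_mul]
      have step2 : ∑ p ∈ F ×ˢ B, ‖(inner ℂ (e p.2) (C (e p.1)) : ℂ)‖
            * ‖(inner ℂ (e p.1) (Z (e p.2)) : ℂ)‖
          ≤ Real.sqrt (∑ p ∈ F ×ˢ B, ‖(inner ℂ (e p.2) (C (e p.1)) : ℂ)‖ ^ 2)
            * Real.sqrt (∑ p ∈ F ×ˢ B, ‖(inner ℂ (e p.1) (Z (e p.2)) : ℂ)‖ ^ 2) :=
        Real.sum_mul_le_sqrt_mul_sqrt _ _ _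
      have step3 : Real.sqrt (∑ p ∈ F ×ˢ B, ‖(inner ℂ (e p.2) (C (e p.1)) : ℂ)‖ ^ 2)
          * Real.sqrt (∑ p ∈ F ×ˢ B, ‖(inner ℂ (e p.1) (Z (e p.2)) : ℂ)‖ ^ 2)
          ≤ (Real.sqrt ((n : ℝ)) * ε) * (Real.sqrt ((n : ℝ) + 1) * ‖Z‖) := by
        apply sqrt_mul_sqrt_le (by positivity) (by positivity)
        · rw [mul_pow, Real.sq_sqrt (by positivity)]; exact hBCF
        · rw [mul_pow, Real.sq_sqrt (by positivity)]; exact hBZB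
      have step4 : (Real.sqrt ((n : ℝ)) * ε) * (Real.sqrt ((n : ℝ) + 1) * ‖Z‖)
          ≤ ((n : ℝ) + 1) * ε * ‖Z‖ := by
        have h := mul_le_mul_of_nonneg_left hsqn (Real.sqrt_nonneg ((n : ℝ) + 1))
        rw [hsqn1] at h
        have h2 := mul_le_mul_of_nonneg_right h (mul_nonneg hεpos.le (norm_nonneg Z))
        nlinarith [h2]
      linarith
    -- put everything together
    have hsum_nonneg : 0 ≤ ∑ j ∈ Finset.Icc 1 (q n), d j :=
      Finset.sum_nonneg fun j hj => (hdpos j (Finset.mem_Icc.mp hj).1).le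
    have habs : (∑ j ∈ Finset.Icc 1 (q n), d j)
        = ‖((∑ j ∈ Finset.Icc 1 (q n), d j : ℝ) : ℂ)‖ := by
      rw [Complex.norm_real, Real.norm_eq_abs, abs_of_nonneg hsum_nonneg]
    have hprod : ((∑ j ∈ Finset.Icc 1 (q n), d j : ℝ) : ℂ)
        = ∑ p ∈ F ×ˢ B, a p.1 p.2 - ∑ p ∈ F ×ˢ B, a p.2 p.1 := by
      rw [hid, ← Finset.sum_sub_distrib,
        Finset.sum_product' (f := fun j i => a j i - a i j)]
    have hfinal : (∑ j ∈ Finset.Icc 1 (q n), d j) ≤ 2 * (((n : ℝ) + 1) * ε * ‖Z‖) := by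
      rw [habs, hprod]
      calc ‖∑ p ∈ F ×ˢ B, a p.1 p.2 - ∑ p ∈ F ×ˢ B, a p.2 p.1‖
          ≤ ‖∑ p ∈ F ×ˢ B, a p.1 p.2‖ + ‖∑ p ∈ F ×ˢ B, a p.2 p.1‖ := norm_sub_le _ _
        _ ≤ 2 * (((n : ℝ) + 1) * ε * ‖Z‖) := by linarith
    have hn1R : (1 : ℝ) ≤ (n : ℝ) := by exact_mod_cast hn1
    exact key_arith hc0 hε (norm_nonneg Z) hn1R hfinal
  -- conclude
  obtain ⟨n, hfr, hge⟩ := (hfreq.and_eventually (eventually_ge_atTop (max (N : ℕ) 1))).exists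
  have hn1 : 1 ≤ n := le_trans (le_max_right _ 1) hge
  have hnN : (N : ℕ) ≤ n := le_trans (le_max_left _ _) hge
  have hk := key n hn1 hnN
  have hqval : q n = n * (n + 1) / 2 := psum_id_eq n
  rw [hqval] at hk
  have hnpos : (0 : ℝ) < (n : ℝ) := by exact_mod_cast hn1
  have h1 : c0 * (n : ℝ) ≤ ∑ j ∈ Finset.Icc 1 (n * (n + 1) / 2), d j := by
    rw [le_div_iff₀ hnpos] at hfr
    exact hfr
  nlinarith [hk, h1, hnpos, hc0]
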